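/- (Linear independence of the Abelian integrals I_0, I_2 and I'_4.) If a, b, c are real numbers such that a·I_0(h) + b·I_2(h) + c·I'_4(h) = 0 for every h > 0, then a = b = c = 0. -/

import Mathlib

open Real Set Filter intervalIntegral

/-- Right endpoint of the exterior oval: `x_max(h) = √(1 + √(1+4h))`. -/
noncomputable def xmax (h : ℝ) : ℝ := Real.sqrt (1 + Real.sqrt (1 + 4*h))

/-- Complete elliptic integral `I_i(h) = ∫_{-x_max}^{x_max} x^i √(2h + x² - x⁴/2) dx`. -/
noncomputable def ellI (i : ℕ) (h : ℝ) : ℝ :=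
  ∫ x in (-xmax h)..(xmax h), x^i * Real.sqrt (2*h + x^2 - x^4/2)

/-- Complete elliptic integral `I'_i(h) = ∫_{-x_max}^{x_max} x^i (2h + x² - x⁴/2)^{-1/2} dx`. -/
noncomputable def ellI' (i : ℕ) (h : ℝ) : ℝ :=
  ∫ x in (-xmax h)..(xmax h), x^i / Real.sqrt (2*h + x^2 - x^4/2)

open MeasureTheory

noncomputable def Fd (h x : ℝ) : ℝ := 2*h + x^2 - x^4/2

lemma s_ge_two {h : ℝ} (hh : 1 ≤ h) : 2 ≤ Real.sqrt (1 + 4*h) :=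
  (Real.le_sqrt' (by norm_num)).2 (by nlinarith)

lemma s_gt_one {h : ℝ} (hh : 0 < h) : 1 < Real.sqrt (1 + 4*h) :=
  Real.lt_sqrt_of_sq_lt (by nlinarith)

lemma xmax_pos {h : ℝ} (hh : 0 < h) : 0 < xmax h :=
  Real.sqrt_pos.2 (by have := Real.sqrt_nonneg (1+4*h); linarith)

lemma xmax_sq {h : ℝ} (hh : 0 < h) : (xmax h)^2 = 1 + Real.sqrt (1 + 4*h) :=
  Real.sq_sqrt (by have := Real.sqrt_nonneg (1+4*h); linarith)

lemma F_factor {h : ℝ} (hh : 0 < h) (x : ℝ) :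
    Fd h x = ((xmax h)^2 - x^2) * (x^2 + (Real.sqrt (1 + 4*h) - 1)) / 2 := by
  have h1 := xmax_sq hh
  have h2 : Real.sqrt (1 + 4*h)^2 = 1 + 4*h := Real.sq_sqrt (by linarith)
  rw [Fd, h1]; linear_combination (-1/2 : ℝ) * h2

lemma F_pos {h x : ℝ} (hh : 0 < h) (hx1 : -(xmax h) < x) (hx2 : x < xmax h) :
    0 < Fd h x := by
  rw [F_factor hh]
  have h1 : x^2 < (xmax h)^2 := by nlinarith
  have h2 := s_gt_one hh
  have h3 : (0:ℝ) < x^2 + (Real.sqrt (1+4*h) - 1) := by nlinarith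
  exact div_pos (mul_pos (by linarith) h3) two_pos

lemma F_root {h x : ℝ} (hh : 0 < h) (hx : x^2 = (xmax h)^2) : Fd h x = 0 := by
  rw [F_factor hh, hx, sub_self, zero_mul, zero_div]

lemma F_le {h x : ℝ} (hh : 1 ≤ h) : Fd h x ≤ 3*h := by
  have : 0 ≤ (x^2 - 1)^2 := sq_nonneg _
  rw [Fd]; nlinarith

lemma F_nonneg {h x : ℝ} (hh : 0 < h) (hx1 : -(xmax h) ≤ x) (hx2 : x ≤ xmax h) :
    0 ≤ Fd h x := by
  rw [F_factor hh]
  have h1 : x^2 ≤ (xmax h)^2 := by nlinarith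
  have h2 := s_gt_one hh
  have h3 : (0:ℝ) < x^2 + (Real.sqrt (1+4*h) - 1) := by nlinarith
  exact div_nonneg (mul_nonneg (by linarith) h3.le) (by norm_num)

lemma xmax_le {q : ℝ} (hq : 1 ≤ q) : xmax (q^4) ≤ 2*q := by
  have hq0 : (0:ℝ) < q := by linarith
  have hq4 : (1:ℝ) ≤ q^4 := one_le_pow₀ hq
  have h1 : Real.sqrt (1 + 4*q^4) ≤ 3*q^2 := by
    rw [show (3:ℝ)*q^2 = Real.sqrt ((3*q^2)^2) by rw [Real.sqrt_sq (by positivity)]]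
    exact Real.sqrt_le_sqrt (by nlinarith)
  rw [xmax, show (2:ℝ)*q = Real.sqrt ((2*q)^2) by rw [Real.sqrt_sq (by positivity)]]
  exact Real.sqrt_le_sqrt (by nlinarith)

lemma le_xmax {q : ℝ} (hq : 1 ≤ q) : q ≤ xmax (q^4) := by
  have hq0 : (0:ℝ) < q := by linarith
  have h1 : q^2 ≤ Real.sqrt (1 + 4*q^4) := by
    rw [show q^2 = Real.sqrt ((q^2)^2) by rw [Real.sqrt_sq (by positivity)]]
    exact Real.sqrt_le_sqrt (by nlinarith)
  rw [xmax]
  exact (Real.le_sqrt' hq0).2 (by nlinarith)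

lemma sqrtF_le {q x : ℝ} (hq : 1 ≤ q) : Real.sqrt (Fd (q^4) x) ≤ 2*q^2 := by
  have hq4 : (1:ℝ) ≤ q^4 := one_le_pow₀ hq
  have h1 : Fd (q^4) x ≤ 3*q^4 := F_le hq4
  calc Real.sqrt (Fd (q^4) x) ≤ Real.sqrt ((2*q^2)^2) :=
        Real.sqrt_le_sqrt (by nlinarith)
    _ = 2*q^2 := Real.sqrt_sq (by positivity)

lemma sqrtF_ge {q x : ℝ} (hq : 1 ≤ q) (hx1 : 0 ≤ x) (hx2 : x ≤ q) :
    q^2 ≤ Real.sqrt (Fd (q^4) x) := by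
  have h1 : q^4 ≤ Fd (q^4) x := by
    rw [Fd]; nlinarith [pow_le_pow_left₀ hx1 hx2 4]
  calc q^2 = Real.sqrt ((q^2)^2) := (Real.sqrt_sq (by positivity)).symm
    _ ≤ _ := Real.sqrt_le_sqrt (by nlinarith)

lemma rpow_neg_half_eq {y : ℝ} (hy : 0 ≤ y) : y ^ (-(1/2) : ℝ) = 1 / Real.sqrt y := by
  rw [Real.rpow_neg hy, Real.sqrt_eq_rpow]; norm_num

lemma kernel_bound {h : ℝ} (hh : 1 ≤ h) (i : ℕ) {x : ℝ} (hx1 : -(xmax h) ≤ x)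
    (hx2 : x ≤ xmax h) :
    |x ^ i / Real.sqrt (Fd h x)| ≤
      Real.sqrt 2 * (xmax h)^i / Real.sqrt (xmax h) *
        ((xmax h - x) ^ (-(1/2) : ℝ) + (x + xmax h) ^ (-(1/2) : ℝ)) := by
  have hh0 : (0:ℝ) < h := by linarith
  set m := xmax h with hm
  have hm0 : 0 < m := xmax_pos hh0
  have hRHS0 : 0 ≤ Real.sqrt 2 * m^i / Real.sqrt m *
      ((m - x) ^ (-(1/2):ℝ) + (x + m) ^ (-(1/2):ℝ)) := by
    have h1 := Real.rpow_nonneg (by linarith : (0:ℝ) ≤ m - x) (-(1/2):ℝ)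
    have h2 := Real.rpow_nonneg (by linarith : (0:ℝ) ≤ x + m) (-(1/2):ℝ)
    positivity
  rcases eq_or_lt_of_le (show x^2 ≤ m^2 by nlinarith) with heq | hlt
  · rw [F_root hh0 heq, Real.sqrt_zero, div_zero, abs_zero]; exact hRHS0
  · have hx1' : -m < x := by nlinarith
    have hx2' : x < m := by nlinarith
    have hF := F_pos hh0 hx1' hx2'
    set a := Real.sqrt (m - x) with hadef
    set b := Real.sqrt (x + m) with hbdef
    have ha : 0 < a := Real.sqrt_pos.2 (by linarith)
    have hb : 0 < b := Real.sqrt_pos.2 (by linarith)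
    have ha2 : a^2 = m - x := Real.sq_sqrt (by linarith)
    have hb2 : b^2 = x + m := Real.sq_sqrt (by linarith)
    have hs := s_ge_two hh
    have hFge : (m - x) * (x + m) / 2 ≤ Fd h x := by
      rw [F_factor hh0, ← hm]
      nlinarith [sq_nonneg x]
    have hab : a * b / Real.sqrt 2 ≤ Real.sqrt (Fd h x) := by
      have h2 : (a * b / Real.sqrt 2)^2 = (m - x) * (x + m) / 2 := by
        rw [div_pow, mul_pow, ha2, hb2, Real.sq_sqrt (by norm_num : (0:ℝ) ≤ 2)]
      rw [show a * b / Real.sqrt 2 = Real.sqrt ((a * b / Real.sqrt 2)^2) from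
        (Real.sqrt_sq (by positivity)).symm, h2]
      exact Real.sqrt_le_sqrt (by linarith)
    have hab0 : 0 < a * b / Real.sqrt 2 := by positivity
    have step1 : |x ^ i / Real.sqrt (Fd h x)| ≤ m^i / (a * b / Real.sqrt 2) := by
      rw [abs_div, abs_of_nonneg (Real.sqrt_nonneg _), abs_pow]
      exact div_le_div₀ (by positivity)
        (pow_le_pow_left₀ (abs_nonneg x) (abs_le.2 ⟨by linarith, by linarith⟩) i) hab0 hab
    have hsqm : 0 < Real.sqrt m := Real.sqrt_pos.2 hm0
    have hsm : Real.sqrt m ≤ a + b := by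
      have h1 : m ≤ (a + b)^2 := by nlinarith [mul_nonneg ha.le hb.le]
      calc Real.sqrt m ≤ Real.sqrt ((a+b)^2) := Real.sqrt_le_sqrt h1
        _ = a + b := Real.sqrt_sq (by positivity)
    have h2 : (1:ℝ)/a + 1/b = (a+b)/(a*b) := by field_simp; ring
    have key : m^i * Real.sqrt 2 ≤ Real.sqrt 2 * m^i / Real.sqrt m * (a+b) := by
      rw [div_mul_eq_mul_div, le_div_iff₀ hsqm]
      nlinarith [mul_le_mul_of_nonneg_left hsm
        (by positivity : (0:ℝ) ≤ Real.sqrt 2 * m^i)]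
    refine le_trans step1 ?_
    calc m^i / (a * b / Real.sqrt 2) = (m^i * Real.sqrt 2) / (a*b) := by
          rw [div_div_eq_mul_div]
      _ ≤ (Real.sqrt 2 * m^i / Real.sqrt m * (a+b)) / (a*b) :=
          (div_le_div_iff_of_pos_right (by positivity)).2 key
      _ = Real.sqrt 2 * m^i / Real.sqrt m * ((a+b)/(a*b)) := by ring
      _ = Real.sqrt 2 * m^i / Real.sqrt m * (1/a + 1/b) := by rw [h2]
      _ = _ := by rw [rpow_neg_half_eq (by linarith : (0:ℝ) ≤ m - x),
            rpow_neg_half_eq (by linarith : (0:ℝ) ≤ x + m)]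

lemma contFd (h : ℝ) : Continuous (Fd h) := by
  unfold Fd
  exact (continuous_const.add (continuous_pow 2)).sub ((continuous_pow 4).div_const 2)

lemma intG (m : ℝ) : IntervalIntegrable
    (fun x => (m - x) ^ (-(1/2):ℝ) + (x + m) ^ (-(1/2):ℝ)) volume (-m) m := by
  have h1 : IntervalIntegrable (fun x : ℝ => x ^ (-(1/2):ℝ)) volume 0 (2*m) :=
    intervalIntegrable_rpow' (by norm_num)
  have h2 := h1.comp_sub_left m
  rw [show m - 0 = m by ring, show m - 2*m = -m by ring] at h2
  have h3 := h1.comp_add_right m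
  rw [show (0:ℝ) - m = -m by ring, show 2*m - m = m by ring] at h3
  exact h2.symm.add h3

lemma measKernel (h : ℝ) (i : ℕ) (S : Set ℝ) :
    AEStronglyMeasurable (fun x => x^i / Real.sqrt (Fd h x)) (volume.restrict S) :=
  (((continuous_pow i).measurable).div
    (Real.continuous_sqrt.measurable.comp (contFd h).measurable)).aestronglyMeasurable

lemma intKernel {h : ℝ} (hh : 1 ≤ h) (i : ℕ) :
    IntervalIntegrable (fun x => x^i / Real.sqrt (Fd h x)) volume (-(xmax h)) (xmax h) := by
  have hm0 : 0 < xmax h := xmax_pos (by linarith)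
  have hG := (intG (xmax h)).const_mul (Real.sqrt 2 * (xmax h)^i / Real.sqrt (xmax h))
  refine hG.mono_fun' (measKernel h i _) ?_
  rw [uIoc_of_le (by linarith : -(xmax h) ≤ xmax h)]
  filter_upwards [ae_restrict_mem measurableSet_Ioc] with x hx
  simpa [Real.norm_eq_abs, abs_div, abs_pow] using kernel_bound hh i hx.1.le hx.2

lemma intSqrt (h : ℝ) (i : ℕ) (a b : ℝ) :
    IntervalIntegrable (fun x => x^i * Real.sqrt (Fd h x)) volume a b :=
  ((continuous_pow i).mul ((contFd h).sqrt)).intervalIntegrable a b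

lemma integral_rpow_half (m : ℝ) (hm : 0 < m) :
    ∫ x in (0:ℝ)..(2*m), x ^ (-(1/2):ℝ) = 2 * Real.sqrt (2*m) := by
  rw [integral_rpow (Or.inl (by norm_num))]
  rw [show (-(1/2:ℝ)) + 1 = 1/2 by norm_num, Real.zero_rpow (by norm_num),
    ← Real.sqrt_eq_rpow]
  ring

lemma integral_G {m : ℝ} (hm : 0 < m) :
    (∫ x in (-m)..m, ((m - x) ^ (-(1/2):ℝ) + (x + m) ^ (-(1/2):ℝ)))
      = 4 * Real.sqrt (2*m) := by
  have h1 : IntervalIntegrable (fun x : ℝ => x ^ (-(1/2):ℝ)) volume 0 (2*m) :=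
    intervalIntegrable_rpow' (by norm_num)
  have h2 := h1.comp_sub_left m
  rw [show m - 0 = m by ring, show m - 2*m = -m by ring] at h2
  have h3 := h1.comp_add_right m
  rw [show (0:ℝ) - m = -m by ring, show 2*m - m = m by ring] at h3
  rw [integral_add h2.symm h3]
  have e1 : (∫ x in (-m)..m, (m - x) ^ (-(1/2):ℝ)) = 2 * Real.sqrt (2*m) := by
    have := intervalIntegral.integral_comp_sub_left (a := -m) (b := m)
      (fun x : ℝ => x ^ (-(1/2):ℝ)) m
    rw [show m - m = 0 by ring, show m - -m = 2*m by ring] at this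
    rw [this, integral_rpow_half m hm]
  have e2 : (∫ x in (-m)..m, (x + m) ^ (-(1/2):ℝ)) = 2 * Real.sqrt (2*m) := by
    have := intervalIntegral.integral_comp_add_right (a := -m) (b := m)
      (fun x : ℝ => x ^ (-(1/2):ℝ)) m
    rw [show -m + m = (0:ℝ) by ring, show m + m = 2*m by ring] at this
    rw [this, integral_rpow_half m hm]
  rw [e1, e2]; ring

lemma kernel_integral_le {h : ℝ} (hh : 1 ≤ h) (i : ℕ) :
    (∫ x in (-(xmax h))..(xmax h), x^i / Real.sqrt (Fd h x)) ≤ 8 * (xmax h)^i := by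
  have hh0 : (0:ℝ) < h := by linarith
  set m := xmax h with hm
  have hm0 : 0 < m := xmax_pos hh0
  have hsm : 0 < Real.sqrt m := Real.sqrt_pos.2 hm0
  have step : (∫ x in (-m)..m, x^i / Real.sqrt (Fd h x)) ≤
      ∫ x in (-m)..m, Real.sqrt 2 * m^i / Real.sqrt m *
        ((m - x) ^ (-(1/2):ℝ) + (x + m) ^ (-(1/2):ℝ)) := by
    apply integral_mono_on (by linarith) (intKernel hh i)
      ((intG m).const_mul _)
    intro x hx
    exact le_trans (le_abs_self _) (kernel_bound hh i hx.1 hx.2)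
  refine le_trans step ?_
  rw [intervalIntegral.integral_const_mul, integral_G hm0, Real.sqrt_mul (by norm_num : (0:ℝ) ≤ 2)]
  have h2 : Real.sqrt 2 * Real.sqrt 2 = 2 := Real.mul_self_sqrt (by norm_num)
  have hsmne : Real.sqrt m ≠ 0 := ne_of_gt hsm
  have key : Real.sqrt 2 * m^i / Real.sqrt m * (4 * (Real.sqrt 2 * Real.sqrt m))
      = 8 * m^i := by
    field_simp
    linear_combination 4 * h2
  rw [key]

lemma pf_identity {h : ℝ} (hh : 1 ≤ h) :
    (∫ x in (-(xmax h))..(xmax h), x^4 / Real.sqrt (Fd h x))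
      = (∫ x in (-(xmax h))..(xmax h), Real.sqrt (Fd h x))
        + ∫ x in (-(xmax h))..(xmax h), x^2 / Real.sqrt (Fd h x) := by
  have hh0 : (0:ℝ) < h := by linarith
  set m := xmax h with hm
  have hm0 : 0 < m := xmax_pos hh0
  set g : ℝ → ℝ := fun x => x * Real.sqrt (Fd h x) with hgdef
  set g' : ℝ → ℝ := fun x =>
    Real.sqrt (Fd h x) + x^2 / Real.sqrt (Fd h x) - x^4 / Real.sqrt (Fd h x) with hg'def
  have hcont : ContinuousOn g (Icc (-m) m) :=
    (continuous_id.mul (contFd h).sqrt).continuousOn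
  have hderiv : ∀ x ∈ Ioo (-m) m, HasDerivWithinAt g (g' x) (Ioi x) x := by
    intro x hx
    have hF := F_pos hh0 hx.1 hx.2
    have hne : Real.sqrt (Fd h x) ≠ 0 := (Real.sqrt_pos.2 hF).ne'
    have hFderiv : HasDerivAt (Fd h) (2*x - 2*x^3) x := by
      have h1 : HasDerivAt (fun y : ℝ => 2*h + y^2 - y^4/2)
          (0 + (2:ℕ)*x^(2-1) - ((4:ℕ)*x^(4-1))/2) x :=
        ((hasDerivAt_const x (2*h)).add (hasDerivAt_pow 2 x)).sub
          ((hasDerivAt_pow 4 x).div_const 2)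
      have h2 : (0 + ((2:ℕ):ℝ)*x^(2-1) - (((4:ℕ):ℝ)*x^(4-1))/2) = 2*x - 2*x^3 := by
        push_cast; ring
      rw [h2] at h1
      exact h1
    have hsq : HasDerivAt (fun y => Real.sqrt (Fd h y))
        ((2*x - 2*x^3) / (2 * Real.sqrt (Fd h x))) x := hFderiv.sqrt (ne_of_gt hF)
    have hprod := (hasDerivAt_id x).mul hsq
    have heq : g' x = 1 * Real.sqrt (Fd h x)
        + id x * ((2*x - 2*x^3) / (2 * Real.sqrt (Fd h x))) := by
      have hsq2 : Real.sqrt (Fd h x)^2 = Fd h x := Real.sq_sqrt hF.le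
      rw [hg'def]; simp only [id]
      field_simp
      linear_combination 0 * hsq2
    rw [heq]
    exact hprod.hasDerivWithinAt
  have hint : IntervalIntegrable g' volume (-m) m := by
    exact (((contFd h).sqrt.intervalIntegrable _ _).add (intKernel hh 2)).sub
      (intKernel hh 4)
  have hFTC := integral_eq_sub_of_hasDeriv_right_of_le (by linarith : -m ≤ m)
    hcont hderiv hint
  have hgm : g m = 0 := by
    rw [hgdef]; simp only []
    rw [F_root hh0 (by ring : m^2 = (xmax h)^2), Real.sqrt_zero, mul_zero]
  have hgmm : g (-m) = 0 := by
    rw [hgdef]; simp only []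
    rw [F_root hh0 (by ring : (-m)^2 = (xmax h)^2), Real.sqrt_zero, mul_zero]
  rw [hgm, hgmm, sub_zero] at hFTC
  have hsplit : (∫ x in (-m)..m, g' x)
      = (∫ x in (-m)..m, Real.sqrt (Fd h x))
        + (∫ x in (-m)..m, x^2 / Real.sqrt (Fd h x))
        - ∫ x in (-m)..m, x^4 / Real.sqrt (Fd h x) := by
    rw [hg'def]
    rw [integral_sub (((contFd h).sqrt.intervalIntegrable _ _).add (intKernel hh 2))
      (intKernel hh 4),
      integral_add ((contFd h).sqrt.intervalIntegrable _ _) (intKernel hh 2)]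
  rw [hsplit] at hFTC
  linarith

lemma integral_piece_le {q : ℝ} (hq : 1 ≤ q) {f : ℝ → ℝ} (hf : ∀ x, 0 ≤ f x)
    (hint : IntervalIntegrable f volume (-(xmax (q^4))) (xmax (q^4))) :
    (∫ x in (0:ℝ)..q, f x) ≤ ∫ x in (-(xmax (q^4)))..(xmax (q^4)), f x := by
  set m := xmax (q^4) with hm
  have hqm : q ≤ m := le_xmax hq
  have hq0 : (0:ℝ) < q := by linarith
  have hm0 : 0 < m := by linarith
  have i1 : IntervalIntegrable f volume (-m) 0 := by
    apply hint.mono_set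
    rw [uIcc_of_le (by linarith : -m ≤ (0:ℝ)), uIcc_of_le (by linarith : -m ≤ m)]
    exact Icc_subset_Icc (le_refl _) (by linarith)
  have i2 : IntervalIntegrable f volume 0 q := by
    apply hint.mono_set
    rw [uIcc_of_le (by linarith : (0:ℝ) ≤ q), uIcc_of_le (by linarith : -m ≤ m)]
    exact Icc_subset_Icc (by linarith) (by linarith)
  have i3 : IntervalIntegrable f volume q m := by
    apply hint.mono_set
    rw [uIcc_of_le (by linarith : q ≤ m), uIcc_of_le (by linarith : -m ≤ m)]
    exact Icc_subset_Icc (by linarith) (le_refl _)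
  have e1 := integral_add_adjacent_intervals i1 (i2.trans i3)
  have e2 := integral_add_adjacent_intervals i2 i3
  have n1 : 0 ≤ ∫ x in (-m)..(0:ℝ), f x :=
    integral_nonneg (by linarith) (fun x _ => hf x)
  have n3 : 0 ≤ ∫ x in q..m, f x :=
    integral_nonneg (by linarith) (fun x _ => hf x)
  rw [← e1, ← e2]
  linarith

lemma I2_lower {q : ℝ} (hq : 1 ≤ q) :
    q^5/3 ≤ ∫ x in (-(xmax (q^4)))..(xmax (q^4)), x^2 * Real.sqrt (Fd (q^4) x) := by
  have hq0 : (0:ℝ) < q := by linarith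
  refine le_trans ?_ (integral_piece_le hq (fun x => by positivity) (intSqrt _ 2 _ _))
  have mono : (∫ x in (0:ℝ)..q, q^2 * x^2) ≤ ∫ x in (0:ℝ)..q, x^2 * Real.sqrt (Fd (q^4) x) := by
    apply integral_mono_on (by linarith)
      ((continuous_const.mul (continuous_pow 2)).intervalIntegrable _ _)
      ((intSqrt _ 2 _ _))
    intro x hx
    have := sqrtF_ge hq hx.1 hx.2
    show q^2 * x^2 ≤ _
    nlinarith [sq_nonneg x]
  refine le_trans (le_of_eq ?_) mono
  rw [intervalIntegral.integral_const_mul, integral_pow]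
  norm_num; ring

lemma I0_lower {q : ℝ} (hq : 1 ≤ q) :
    q^3 ≤ ∫ x in (-(xmax (q^4)))..(xmax (q^4)), Real.sqrt (Fd (q^4) x) := by
  have hq0 : (0:ℝ) < q := by linarith
  refine le_trans ?_ (integral_piece_le hq (fun x => Real.sqrt_nonneg _)
    (((contFd _).sqrt).intervalIntegrable _ _))
  have mono : (∫ x in (0:ℝ)..q, q^2) ≤ ∫ x in (0:ℝ)..q, Real.sqrt (Fd (q^4) x) := by
    apply integral_mono_on (by linarith)
      (intervalIntegrable_const) (((contFd _).sqrt).intervalIntegrable _ _)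
    intro x hx
    exact sqrtF_ge hq hx.1 hx.2
  refine le_trans (le_of_eq ?_) mono
  rw [intervalIntegral.integral_const, smul_eq_mul]
  ring

lemma I'2_lower {q : ℝ} (hq : 1 ≤ q) :
    q/6 ≤ ∫ x in (-(xmax (q^4)))..(xmax (q^4)), x^2 / Real.sqrt (Fd (q^4) x) := by
  have hq0 : (0:ℝ) < q := by linarith
  have hq4 : (1:ℝ) ≤ q^4 := one_le_pow₀ hq
  refine le_trans ?_ (integral_piece_le hq (fun x => by positivity) (intKernel hq4 2))
  have mono : (∫ x in (0:ℝ)..q, x^2 / (2*q^2)) ≤ ∫ x in (0:ℝ)..q, x^2 / Real.sqrt (Fd (q^4) x) := by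
    apply integral_mono_on (by linarith)
      (((continuous_pow 2).div_const _).intervalIntegrable _ _)
      ((intKernel hq4 2).mono_set (by
        have hm0 : 0 < xmax (q^4) := xmax_pos (by linarith)
        have hqm : q ≤ xmax (q^4) := le_xmax hq
        rw [uIcc_of_le (by linarith : (0:ℝ) ≤ q),
          uIcc_of_le (by linarith : -(xmax (q^4)) ≤ xmax (q^4))]
        exact Icc_subset_Icc (by linarith) hqm))
    intro x hx
    have h1 : Real.sqrt (Fd (q^4) x) ≤ 2*q^2 := sqrtF_le hq
    have h2 : q^2 ≤ Real.sqrt (Fd (q^4) x) := sqrtF_ge hq hx.1 hx.2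
    have h3 : 0 < Real.sqrt (Fd (q^4) x) := lt_of_lt_of_le (by positivity) h2
    exact div_le_div_of_nonneg_left (sq_nonneg x) h3 h1
  refine le_trans (le_of_eq ?_) mono
  rw [show (fun x : ℝ => x^2 / (2*q^2)) = fun x : ℝ => (2*q^2)⁻¹ * x^2 by
    funext x; ring, intervalIntegral.integral_const_mul, integral_pow]
  field_simp; ring

lemma I0_upper {q : ℝ} (hq : 1 ≤ q) :
    (∫ x in (-(xmax (q^4)))..(xmax (q^4)), Real.sqrt (Fd (q^4) x)) ≤ 8*q^3 := by
  have hq0 : (0:ℝ) < q := by linarith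
  have hm0 : 0 < xmax (q^4) := xmax_pos (by positivity)
  have hb := intervalIntegral.norm_integral_le_of_norm_le_const
    (a := -(xmax (q^4))) (b := xmax (q^4)) (C := 2*q^2)
    (f := fun x => Real.sqrt (Fd (q^4) x)) ?_
  · have h2 : |xmax (q^4) - -(xmax (q^4))| = 2 * xmax (q^4) := by
      rw [abs_of_nonneg (by linarith)]; ring
    rw [h2] at hb
    have h3 : xmax (q^4) ≤ 2*q := xmax_le hq
    calc (∫ x in (-(xmax (q^4)))..(xmax (q^4)), Real.sqrt (Fd (q^4) x))
        ≤ ‖∫ x in (-(xmax (q^4)))..(xmax (q^4)), Real.sqrt (Fd (q^4) x)‖ := le_norm_self _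
      _ ≤ 2*q^2 * (2 * xmax (q^4)) := hb
      _ ≤ 8*q^3 := by nlinarith
  · intro x _
    rw [Real.norm_eq_abs, abs_of_nonneg (Real.sqrt_nonneg _)]
    exact sqrtF_le hq

lemma I'2_upper {q : ℝ} (hq : 1 ≤ q) :
    (∫ x in (-(xmax (q^4)))..(xmax (q^4)), x^2 / Real.sqrt (Fd (q^4) x)) ≤ 32*q^2 := by
  have hq4 : (1:ℝ) ≤ q^4 := one_le_pow₀ hq
  have h1 := kernel_integral_le hq4 2
  have h3 : xmax (q^4) ≤ 2*q := xmax_le hq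
  have hm0 : 0 < xmax (q^4) := xmax_pos (by linarith)
  nlinarith

lemma ellI0_eq (h : ℝ) :
    ellI 0 h = ∫ x in (-(xmax h))..(xmax h), Real.sqrt (Fd h x) := by
  simp only [ellI, Fd, pow_zero, one_mul]

lemma ellI2_eq (h : ℝ) :
    ellI 2 h = ∫ x in (-(xmax h))..(xmax h), x^2 * Real.sqrt (Fd h x) := rfl

lemma ellI'_eq (i : ℕ) (h : ℝ) :
    ellI' i h = ∫ x in (-(xmax h))..(xmax h), x^i / Real.sqrt (Fd h x) := rfl

/-- Linear independence of the Abelian integrals `I₀`, `I₂` and `I₄'`. -/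
theorem ellI_linear_independent_three (a b c : ℝ)
    (hzero : ∀ h : ℝ, 0 < h → a * ellI 0 h + b * ellI 2 h + c * ellI' 4 h = 0) :
    a = 0 ∧ b = 0 ∧ c = 0 := by
  have key : ∀ q : ℝ, 1 ≤ q →
      (a + c) * (∫ x in (-(xmax (q^4)))..(xmax (q^4)), Real.sqrt (Fd (q^4) x))
      + b * (∫ x in (-(xmax (q^4)))..(xmax (q^4)), x^2 * Real.sqrt (Fd (q^4) x))
      + c * (∫ x in (-(xmax (q^4)))..(xmax (q^4)), x^2 / Real.sqrt (Fd (q^4) x))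
        = 0 := by
    intro q hq
    have hq4 : (1:ℝ) ≤ q^4 := one_le_pow₀ hq
    have h0 := hzero (q^4) (by linarith)
    rw [ellI0_eq, ellI2_eq, ellI'_eq, pf_identity hq4] at h0
    linarith
  have hb : b = 0 := by
    by_contra hb
    have hb0 : 0 < |b| := abs_pos.2 hb
    set q : ℝ := max 1 ((24*|a+c| + 96*|c| + 3)/|b|) with hqdef
    have hq1 : 1 ≤ q := le_max_left _ _
    have hq0 : (0:ℝ) < q := by linarith
    have hq2 : 24*|a+c| + 96*|c| + 3 ≤ |b| * q := by
      have hle := le_max_right 1 ((24*|a+c| + 96*|c| + 3)/|b|)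
      calc 24*|a+c| + 96*|c| + 3 = (24*|a+c| + 96*|c| + 3)/|b| * |b| := by
            field_simp
        _ ≤ q * |b| := mul_le_mul_of_nonneg_right hle (abs_nonneg b)
        _ = |b| * q := mul_comm _ _
    have k := key q hq1
    set I0 := ∫ x in (-(xmax (q^4)))..(xmax (q^4)), Real.sqrt (Fd (q^4) x) with hI0
    set I2 := ∫ x in (-(xmax (q^4)))..(xmax (q^4)), x^2 * Real.sqrt (Fd (q^4) x) with hI2
    set I2' := ∫ x in (-(xmax (q^4)))..(xmax (q^4)), x^2 / Real.sqrt (Fd (q^4) x) with hI2'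
    have L2 := I2_lower hq1
    have U0 := I0_upper hq1
    have U2' := I'2_upper hq1
    have L0 := I0_lower hq1
    have L2' := I'2_lower hq1
    rw [← hI0] at U0 L0
    rw [← hI2] at L2
    rw [← hI2'] at U2' L2'
    have hI2nn : 0 ≤ I2 := le_trans (by positivity) L2
    have hI0nn : 0 ≤ I0 := le_trans (by positivity) L0
    have hI2'nn : 0 ≤ I2' := le_trans (by positivity) L2'
    have e : b * I2 = -((a+c)*I0 + c*I2') := by linarith
    have habs : |b| * I2 ≤ |a+c| * (8*q^3) + |c| * (32*q^2) := by
      have h1 : |b| * I2 = |b * I2| := by rw [abs_mul, abs_of_nonneg hI2nn]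
      rw [h1, e, abs_neg]
      calc |(a+c)*I0 + c*I2'| ≤ |(a+c)*I0| + |c*I2'| := abs_add_le _ _
        _ = |a+c| * I0 + |c| * I2' := by
            rw [abs_mul, abs_mul, abs_of_nonneg hI0nn, abs_of_nonneg hI2'nn]
        _ ≤ |a+c| * (8*q^3) + |c| * (32*q^2) := by
            have g1 := mul_le_mul_of_nonneg_left U0 (abs_nonneg (a+c))
            have g2 := mul_le_mul_of_nonneg_left U2' (abs_nonneg c)
            linarith
    have f1 : (24*|a+c| + 96*|c| + 3) * q^4 ≤ |b| * q * q^4 :=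
      mul_le_mul_of_nonneg_right hq2 (by positivity)
    have f2 : q^3 ≤ q^4 := by nlinarith [pow_pos hq0 3]
    have f3 : q^2 ≤ q^4 := by nlinarith [pow_pos hq0 2]
    have g3 := mul_le_mul_of_nonneg_left L2 (abs_nonneg b)
    have g4 := mul_le_mul_of_nonneg_left f2 (abs_nonneg (a+c))
    have g5 := mul_le_mul_of_nonneg_left f3 (abs_nonneg c)
    have hq45 : |b| * q * q^4 = |b| * q^5 := by ring
    nlinarith [pow_pos hq0 4, pow_pos hq0 5]
  have hac : a + c = 0 := by
    by_contra hac
    have hac0 : 0 < |a+c| := abs_pos.2 hac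
    set q : ℝ := max 1 ((32*|c| + 1)/|a+c|) with hqdef
    have hq1 : 1 ≤ q := le_max_left _ _
    have hq0 : (0:ℝ) < q := by linarith
    have hq2 : 32*|c| + 1 ≤ |a+c| * q := by
      have hle := le_max_right 1 ((32*|c| + 1)/|a+c|)
      calc 32*|c| + 1 = (32*|c| + 1)/|a+c| * |a+c| := by field_simp
        _ ≤ q * |a+c| := mul_le_mul_of_nonneg_right hle (abs_nonneg (a+c))
        _ = |a+c| * q := mul_comm _ _
    have k := key q hq1
    set I0 := ∫ x in (-(xmax (q^4)))..(xmax (q^4)), Real.sqrt (Fd (q^4) x) with hI0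
    set I2' := ∫ x in (-(xmax (q^4)))..(xmax (q^4)), x^2 / Real.sqrt (Fd (q^4) x) with hI2'
    have U2' := I'2_upper hq1
    have L0 := I0_lower hq1
    have L2' := I'2_lower hq1
    rw [← hI0] at L0
    rw [← hI2'] at U2' L2'
    have hI0nn : 0 ≤ I0 := le_trans (by positivity) L0
    have hI2'nn : 0 ≤ I2' := le_trans (by positivity) L2'
    have e : (a+c) * I0 = -(c * I2') := by rw [hb] at k; linarith
    have habs : |a+c| * I0 ≤ |c| * (32*q^2) := by
      have h1 : |a+c| * I0 = |(a+c) * I0| := by rw [abs_mul, abs_of_nonneg hI0nn]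
      rw [h1, e, abs_neg, abs_mul, abs_of_nonneg hI2'nn]
      exact mul_le_mul_of_nonneg_left U2' (abs_nonneg c)
    have g1 := mul_le_mul_of_nonneg_left L0 (abs_nonneg (a+c))
    have f1 : (32*|c| + 1) * q^2 ≤ |a+c| * q * q^2 :=
      mul_le_mul_of_nonneg_right hq2 (by positivity)
    nlinarith [pow_pos hq0 2, pow_pos hq0 3]
  have hc : c = 0 := by
    have k := key 1 le_rfl
    have L2' := I'2_lower (le_refl (1:ℝ))
    rw [hb, hac] at k
    have : c * (∫ x in (-(xmax (1^4)))..(xmax (1^4)), x^2 / Real.sqrt (Fd (1^4) x))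
        = 0 := by linarith
    rcases mul_eq_zero.1 this with h | h
    · exact h
    · rw [h] at L2'; norm_num at L2'
  exact ⟨by linarith, hb, hc⟩
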